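/- (Theorem 3(i)) For the Ulam-Warburton cellular automaton, the number u(n) of cells turned ON at stage n satisfies: u(0) = 0, u(1) = 1, and for every k >= 0, u(2^k + 1) = 4 and u(2^k + j) = 3*u(j) for all j with 2 <= j <= 2^k. -/

import Mathlib

set_option linter.unusedSectionVars false
set_option linter.unreachableTactic false
set_option linter.unusedTactic false
set_option linter.unusedVariables false

/-- The four von Neumann neighbors of a cell in `ℤ × ℤ`. -/
def vnNbrs (p : ℤ × ℤ) : Finset (ℤ × ℤ) :=
  {(p.1 - 1, p.2), (p.1 + 1, p.2), (p.1, p.2 - 1), (p.1, p.2 + 1)}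

namespace UW

def rho (q : ℤ × ℤ) : ℤ × ℤ := (-q.2, q.1)
def em (M : ℤ) (q : ℤ × ℤ) : ℤ × ℤ := (M + q.1, q.2)
def sw (q : ℤ × ℤ) : ℤ × ℤ := (q.2, q.1)
def nsw (q : ℤ × ℤ) : ℤ × ℤ := (-q.2, -q.1)
def c0 (q : ℤ × ℤ) : Prop := -q.2 ≤ q.1 ∨ q.2 ≤ q.1
def wallp (q : ℤ × ℤ) : Prop := (0 ≤ q.2 ∧ q.1 = -1 - q.2) ∨ (q.2 ≤ 0 ∧ q.1 = -1 + q.2)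
def nrm (q : ℤ × ℤ) : ℕ := q.1.natAbs + q.2.natAbs
def diag (q : ℤ × ℤ) : Prop := q.1.natAbs = q.2.natAbs

instance : DecidablePred c0 := fun q => by unfold c0; infer_instance
instance : DecidablePred wallp := fun q => by unfold wallp; infer_instance
instance : DecidablePred diag := fun q => by unfold diag; infer_instance

lemma mem_vnNbrs {r p : ℤ × ℤ} : r ∈ vnNbrs p ↔
    r = (p.1 - 1, p.2) ∨ r = (p.1 + 1, p.2) ∨ r = (p.1, p.2 - 1) ∨ r = (p.1, p.2 + 1) := by
  simp [vnNbrs]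

lemma vnNbrs_comm {r p : ℤ × ℤ} : r ∈ vnNbrs p ↔ p ∈ vnNbrs r := by
  simp only [mem_vnNbrs, Prod.ext_iff]; omega

lemma image_vnNbrs_rho (p : ℤ × ℤ) : (vnNbrs p).image rho = vnNbrs (rho p) := by
  ext r; simp only [vnNbrs, rho, Finset.image_insert, Finset.image_singleton,
    Finset.mem_insert, Finset.mem_singleton, Prod.ext_iff]; omega

lemma image_vnNbrs_sw (p : ℤ × ℤ) : (vnNbrs p).image sw = vnNbrs (sw p) := by
  ext r; simp only [vnNbrs, sw, Finset.image_insert, Finset.image_singleton,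
    Finset.mem_insert, Finset.mem_singleton, Prod.ext_iff]; omega

lemma image_vnNbrs_nsw (p : ℤ × ℤ) : (vnNbrs p).image nsw = vnNbrs (nsw p) := by
  ext r; simp only [vnNbrs, nsw, Finset.image_insert, Finset.image_singleton,
    Finset.mem_insert, Finset.mem_singleton, Prod.ext_iff]; omega

lemma image_vnNbrs_em (M : ℤ) (p : ℤ × ℤ) : (vnNbrs p).image (em M) = vnNbrs (em M p) := by
  ext r; simp only [vnNbrs, em, Finset.image_insert, Finset.image_singleton,
    Finset.mem_insert, Finset.mem_singleton, Prod.ext_iff]; omega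

lemma rho_inj : Function.Injective rho := by
  intro a b h; simp only [rho, Prod.ext_iff] at h ⊢; omega

lemma sw_inj : Function.Injective sw := by
  intro a b h; simp only [sw, Prod.ext_iff] at h ⊢; omega

lemma nsw_inj : Function.Injective nsw := by
  intro a b h; simp only [nsw, Prod.ext_iff] at h ⊢; omega

lemma em_inj (M : ℤ) : Function.Injective (em M) := by
  intro a b h; simp only [em, Prod.ext_iff] at h ⊢; omega

lemma rho4 (p : ℤ × ℤ) : rho (rho (rho (rho p))) = p := by simp [rho]

lemma nrm_rho (p : ℤ × ℤ) : nrm (rho p) = nrm p := by simp only [nrm, rho, Int.natAbs_neg]; omega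

lemma diag_rho (p : ℤ × ℤ) : diag (rho p) ↔ diag p := by simp only [diag, rho, Int.natAbs_neg]; omega

-- counting helpers
lemma inter_eq_filter (s A : Finset (ℤ × ℤ)) : s ∩ A = s.filter (· ∈ A) := by
  ext r; simp [Finset.mem_filter, Finset.mem_inter]

lemma cnt_quad (A : Finset (ℤ × ℤ)) (p : ℤ × ℤ) :
    (vnNbrs p ∩ A).card =
      (if (p.1 - 1, p.2) ∈ A then 1 else 0) + (if (p.1 + 1, p.2) ∈ A then 1 else 0) +
      (if (p.1, p.2 - 1) ∈ A then 1 else 0) + (if (p.1, p.2 + 1) ∈ A then 1 else 0) := by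
  rw [inter_eq_filter, Finset.card_filter]
  show (∑ a ∈ insert (p.1 - 1, p.2) (insert (p.1 + 1, p.2) (insert (p.1, p.2 - 1)
    ({(p.1, p.2 + 1)} : Finset (ℤ × ℤ)))), if a ∈ A then 1 else 0) = _
  rw [Finset.sum_insert (by simp only [Finset.mem_insert, Finset.mem_singleton, Prod.ext_iff]; omega),
    Finset.sum_insert (by simp only [Finset.mem_insert, Finset.mem_singleton, Prod.ext_iff]; omega),
    Finset.sum_insert (by simp only [Finset.mem_insert, Finset.mem_singleton, Prod.ext_iff]; omega), Finset.sum_singleton]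
  ring

lemma card_image_inter {f : ℤ × ℤ → ℤ × ℤ} (hf : Function.Injective f)
    (s A : Finset (ℤ × ℤ)) : ((s.image f) ∩ A).card = (s.filter (fun r => f r ∈ A)).card := by
  have : (s.image f) ∩ A = (s.filter (fun r => f r ∈ A)).image f := by
    ext r
    simp only [Finset.mem_inter, Finset.mem_image, Finset.mem_filter]
    constructor
    · rintro ⟨⟨a, ha, rfl⟩, h2⟩; exact ⟨a, ⟨ha, h2⟩, rfl⟩
    · rintro ⟨a, ⟨ha, h2⟩, rfl⟩; exact ⟨⟨a, ha, rfl⟩, h2⟩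
  rw [this, Finset.card_image_of_injective _ hf]


def D0 (M : ℤ) (A : Finset (ℤ × ℤ)) : Finset (ℤ × ℤ) := (A.filter c0).image (em M)

def Cop (M : ℤ) (A : Finset (ℤ × ℤ)) : Finset (ℤ × ℤ) :=
  D0 M A ∪ (D0 M A).image rho ∪ ((D0 M A).image rho).image rho ∪
    (((D0 M A).image rho).image rho).image rho

def tips (M : ℤ) : Finset (ℤ × ℤ) := {(M, 0), (0, M), (-M, 0), (0, -M)}

lemma mem_Cop {M : ℤ} {A : Finset (ℤ × ℤ)} {p : ℤ × ℤ} :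
    p ∈ Cop M A ↔
      (∃ q ∈ A, c0 q ∧ p = em M q) ∨ (∃ q ∈ A, c0 q ∧ p = rho (em M q)) ∨
      (∃ q ∈ A, c0 q ∧ p = rho (rho (em M q))) ∨
      (∃ q ∈ A, c0 q ∧ p = rho (rho (rho (em M q)))) := by
  simp only [Cop, D0, Finset.mem_union, Finset.mem_image, Finset.mem_filter]
  constructor
  · rintro (((⟨q, ⟨h1, h2⟩, rfl⟩ | ⟨x, ⟨q, ⟨h1, h2⟩, rfl⟩, rfl⟩) |
      ⟨x, ⟨y, ⟨q, ⟨h1, h2⟩, rfl⟩, rfl⟩, rfl⟩) |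
      ⟨x, ⟨y, ⟨z, ⟨q, ⟨h1, h2⟩, rfl⟩, rfl⟩, rfl⟩, rfl⟩)
    · exact Or.inl ⟨q, h1, h2, rfl⟩
    · exact Or.inr (Or.inl ⟨q, h1, h2, rfl⟩)
    · exact Or.inr (Or.inr (Or.inl ⟨q, h1, h2, rfl⟩))
    · exact Or.inr (Or.inr (Or.inr ⟨q, h1, h2, rfl⟩))
  · rintro (⟨q, h1, h2, rfl⟩ | ⟨q, h1, h2, rfl⟩ | ⟨q, h1, h2, rfl⟩ | ⟨q, h1, h2, rfl⟩)
    · exact Or.inl (Or.inl (Or.inl ⟨q, ⟨h1, h2⟩, rfl⟩))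
    · exact Or.inl (Or.inl (Or.inr ⟨em M q, ⟨q, ⟨h1, h2⟩, rfl⟩, rfl⟩))
    · exact Or.inl (Or.inr ⟨rho (em M q), ⟨em M q, ⟨q, ⟨h1, h2⟩, rfl⟩, rfl⟩, rfl⟩)
    · exact Or.inr ⟨rho (rho (em M q)), ⟨rho (em M q), ⟨em M q, ⟨q, ⟨h1, h2⟩, rfl⟩, rfl⟩, rfl⟩, rfl⟩

lemma D0_subset_Cop {M : ℤ} {A : Finset (ℤ × ℤ)} : D0 M A ⊆ Cop M A := by
  intro p hp; simp only [Cop, Finset.mem_union]; tauto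

lemma Cop_mono {M : ℤ} {A B : Finset (ℤ × ℤ)} (h : A ⊆ B) : Cop M A ⊆ Cop M B := by
  intro p hp
  rw [mem_Cop] at hp ⊢
  rcases hp with ⟨q, h1, h2⟩ | ⟨q, h1, h2⟩ | ⟨q, h1, h2⟩ | ⟨q, h1, h2⟩
  · exact Or.inl ⟨q, h h1, h2⟩
  · exact Or.inr (Or.inl ⟨q, h h1, h2⟩)
  · exact Or.inr (Or.inr (Or.inl ⟨q, h h1, h2⟩))
  · exact Or.inr (Or.inr (Or.inr ⟨q, h h1, h2⟩))

lemma rho_mem_Cop {M : ℤ} {A : Finset (ℤ × ℤ)} {p : ℤ × ℤ} :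
    p ∈ Cop M A ↔ rho p ∈ Cop M A := by
  rw [mem_Cop, mem_Cop]
  constructor
  · rintro (⟨q, h1, h2, rfl⟩ | ⟨q, h1, h2, rfl⟩ | ⟨q, h1, h2, rfl⟩ | ⟨q, h1, h2, rfl⟩)
    · exact Or.inr (Or.inl ⟨q, h1, h2, rfl⟩)
    · exact Or.inr (Or.inr (Or.inl ⟨q, h1, h2, rfl⟩))
    · exact Or.inr (Or.inr (Or.inr ⟨q, h1, h2, rfl⟩))
    · exact Or.inl ⟨q, h1, h2, (rho4 (em M q)).symm ▸ rfl⟩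
  · rintro (⟨q, h1, h2, he⟩ | ⟨q, h1, h2, he⟩ | ⟨q, h1, h2, he⟩ | ⟨q, h1, h2, he⟩)
    · exact Or.inr (Or.inr (Or.inr ⟨q, h1, h2, by
        have := congrArg (fun x => rho (rho (rho x))) he; simpa [rho4] using this⟩))
    · exact Or.inl ⟨q, h1, h2, rho_inj he⟩
    · exact Or.inr (Or.inl ⟨q, h1, h2, rho_inj he⟩)
    · exact Or.inr (Or.inr (Or.inl ⟨q, h1, h2, rho_inj he⟩))

lemma g1 {q r : ℤ × ℤ} (hq : c0 q) (hr : r ∈ vnNbrs q) : c0 r ∨ wallp r := by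
  simp only [c0, wallp] at *
  rcases mem_vnNbrs.1 hr with rfl | rfl | rfl | rfl <;> (simp only at * <;> omega)

lemma card_filter_quad (P : ℤ × ℤ → Prop) [DecidablePred P] (p : ℤ × ℤ) :
    ((vnNbrs p).filter P).card =
      (if P (p.1 - 1, p.2) then 1 else 0) + (if P (p.1 + 1, p.2) then 1 else 0) +
      (if P (p.1, p.2 - 1) then 1 else 0) + (if P (p.1, p.2 + 1) then 1 else 0) := by
  rw [Finset.card_filter]
  show (∑ a ∈ insert (p.1 - 1, p.2) (insert (p.1 + 1, p.2) (insert (p.1, p.2 - 1)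
    ({(p.1, p.2 + 1)} : Finset (ℤ × ℤ)))), if P a then 1 else 0) = _
  rw [Finset.sum_insert (by simp only [Finset.mem_insert, Finset.mem_singleton, Prod.ext_iff]; omega),
    Finset.sum_insert (by simp only [Finset.mem_insert, Finset.mem_singleton, Prod.ext_iff]; omega),
    Finset.sum_insert (by simp only [Finset.mem_insert, Finset.mem_singleton, Prod.ext_iff]; omega),
    Finset.sum_singleton]
  ring

lemma g2 {q : ℤ × ℤ} (hq : c0 q) (hq0 : q ≠ (0, 0)) :
    ((vnNbrs q).filter wallp).card = 0 ∨ (diag q ∧ ((vnNbrs q).filter wallp).card = 2) := by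
  have hq0' : ¬(q.1 = 0 ∧ q.2 = 0) := by
    intro h; exact hq0 (Prod.ext h.1 h.2)
  rw [card_filter_quad]
  split_ifs <;> simp only [c0, wallp, diag, true_or, and_true, false_or] at * <;> omega

lemma nrm_nbr' {p r : ℤ × ℤ} (h : r ∈ vnNbrs p) : nrm r ≤ nrm p + 1 := by
  rcases mem_vnNbrs.1 h with rfl | rfl | rfl | rfl <;> (simp only [nrm]; omega)

section Auto

variable (S : ℕ → Finset (ℤ × ℤ))
variable (hS0 : S 0 = ∅)
variable (hS1 : S 1 = {((0 : ℤ), (0 : ℤ))})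
variable (hstep : ∀ n, 1 ≤ n → ∀ p : ℤ × ℤ,
      p ∈ S (n + 1) ↔ p ∈ S n ∨ (p ∉ S n ∧ (vnNbrs p ∩ S n).card = 1))

include hS0 hS1 hstep

lemma S_mono : ∀ n, S n ⊆ S (n + 1) := by
  intro n
  rcases Nat.eq_zero_or_pos n with rfl | hn
  · rw [hS0]; exact Finset.empty_subset _
  · intro p hp; rw [hstep n hn]; exact Or.inl hp

lemma S_le {m n : ℕ} (h : m ≤ n) : S m ⊆ S n := by
  induction n with
  | zero => rw [Nat.le_zero] at h; subst h; exact Finset.Subset.refl _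
  | succ n ih =>
    rcases Nat.lt_or_ge m (n+1) with h' | h'
    · exact (ih (by omega)).trans (S_mono S hS0 hS1 hstep n)
    · have : m = n + 1 := by omega
      subst this; exact Finset.Subset.refl _

lemma zero_mem {n : ℕ} (hn : 1 ≤ n) : ((0 : ℤ), (0 : ℤ)) ∈ S n := by
  apply S_le S hS0 hS1 hstep hn
  rw [hS1]; simp

omit hS0 hS1 hstep in
lemma nrm_nbr {p r : ℤ × ℤ} (h : r ∈ vnNbrs p) : nrm p ≤ nrm r + 1 := by
  rcases mem_vnNbrs.1 h with rfl | rfl | rfl | rfl <;> (simp only [nrm]; omega)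

lemma S_ball : ∀ n, ∀ p ∈ S n, nrm p + 1 ≤ n := by
  intro n
  induction n with
  | zero => rw [hS0]; intro p hp; exact absurd hp (Finset.notMem_empty p)
  | succ n ih =>
    rcases Nat.eq_zero_or_pos n with rfl | hn
    · rw [hS1]; intro p hp
      rw [Finset.mem_singleton] at hp; subst hp; simp [nrm]
    · intro p hp
      rw [hstep n hn] at hp
      rcases hp with hp | ⟨_, hc⟩
      · have := ih p hp; omega
      · have hne : (vnNbrs p ∩ S n).Nonempty := by
          rw [← Finset.card_pos, hc]; norm_num
        obtain ⟨r, hr⟩ := hne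
        rw [Finset.mem_inter] at hr
        have h1 := ih r hr.2
        have h2 := nrm_nbr hr.1
        omega

lemma sym_gen (f : ℤ × ℤ → ℤ × ℤ) (hinj : Function.Injective f)
    (h0 : f (0, 0) = (0, 0)) (him : ∀ p, (vnNbrs p).image f = vnNbrs (f p)) :
    ∀ n, ∀ p : ℤ × ℤ, p ∈ S n ↔ f p ∈ S n := by
  intro n
  induction n with
  | zero => rw [hS0]; simp
  | succ n ih =>
    rcases Nat.eq_zero_or_pos n with rfl | hn
    · rw [hS1]; intro p; simp only [Finset.mem_singleton]
      constructor
      · rintro rfl; exact h0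
      · intro h; apply hinj; rw [h0, h]
    · intro p
      have hcnt : (vnNbrs (f p) ∩ S n).card = (vnNbrs p ∩ S n).card := by
        rw [← him p, card_image_inter hinj, inter_eq_filter]
        apply Finset.card_nbij' id id <;> intro a ha <;>
          simp only [Finset.mem_coe, Finset.mem_filter, id] at * <;>
          exact ⟨ha.1, by rw [← ih a] at *; tauto⟩
      rw [hstep n hn, hstep n hn, hcnt, ← ih p]

lemma S_rho {n : ℕ} {p : ℤ × ℤ} : p ∈ S n ↔ rho p ∈ S n :=
  sym_gen S hS0 hS1 hstep rho rho_inj (by simp [rho]) image_vnNbrs_rho n p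

lemma S_sw {n : ℕ} {p : ℤ × ℤ} : p ∈ S n ↔ sw p ∈ S n :=
  sym_gen S hS0 hS1 hstep sw sw_inj (by simp [sw]) image_vnNbrs_sw n p

lemma S_nsw {n : ℕ} {p : ℤ × ℤ} : p ∈ S n ↔ nsw p ∈ S n :=
  sym_gen S hS0 hS1 hstep nsw nsw_inj (by simp [nsw]) image_vnNbrs_nsw n p

lemma diag_cnt_ne_one {n : ℕ} {p : ℤ × ℤ} (hd : diag p) (hp : p ≠ (0, 0)) :
    (vnNbrs p ∩ S n).card ≠ 1 := by
  rw [cnt_quad]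
  have hd' : p.1 = p.2 ∨ p.1 = -p.2 := by
    simp only [diag] at hd
    have : p.1 = p.2 ∨ p.1 = -p.2 ∨ p.2 = -p.1 := by omega
    rcases this with h | h | h
    · exact Or.inl h
    · exact Or.inr h
    · exact Or.inr (by omega)
  rcases hd' with h | h
  · -- p = (t,t); pair via sw
    have e1 : (p.1 - 1, p.2) ∈ S n ↔ (p.1, p.2 - 1) ∈ S n := by
      rw [S_sw S hS0 hS1 hstep (p := (p.1 - 1, p.2))]
      simp only [sw]; rw [h]
    have e2 : (p.1 + 1, p.2) ∈ S n ↔ (p.1, p.2 + 1) ∈ S n := by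
      rw [S_sw S hS0 hS1 hstep (p := (p.1 + 1, p.2))]
      simp only [sw]; rw [h]
    split_ifs with h1 h2 h3 h4 <;> simp_all <;> omega
  · -- p = (t,-t); pair via nsw
    have e1 : (p.1 - 1, p.2) ∈ S n ↔ (p.1, p.2 + 1) ∈ S n := by
      rw [S_nsw S hS0 hS1 hstep (p := (p.1 - 1, p.2))]
      simp only [nsw]
      constructor <;> (intro hx; convert hx using 2 <;> omega)
    have e2 : (p.1 + 1, p.2) ∈ S n ↔ (p.1, p.2 - 1) ∈ S n := by
      rw [S_nsw S hS0 hS1 hstep (p := (p.1 + 1, p.2))]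
      simp only [nsw]
      constructor <;> (intro hx; convert hx using 2 <;> omega)
    split_ifs with h1 h2 h3 h4 <;> simp_all <;> omega

lemma diag_not_mem : ∀ {n : ℕ} {p : ℤ × ℤ}, diag p → p ≠ (0, 0) → p ∉ S n := by
  intro n
  induction n with
  | zero => rw [hS0]; intro p _ _; exact Finset.notMem_empty p
  | succ n ih =>
    rcases Nat.eq_zero_or_pos n with rfl | hn
    · rw [hS1]; intro p hd hp
      simp only [Finset.mem_singleton]; exact hp
    · intro p hd hp hmem
      rw [hstep n hn] at hmem
      rcases hmem with hmem | ⟨_, hc⟩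
      · exact ih hd hp hmem
      · exact diag_cnt_ne_one S hS0 hS1 hstep hd hp hc

lemma geom {M j : ℕ} (hM : 1 ≤ M)
    (hL : ∀ p : ℤ × ℤ, nrm p + 1 = M → p ∈ S M)
    (hj : 1 ≤ j) (hjM : j ≤ M) {q : ℤ × ℤ} (hq : c0 q) (hqn : nrm q ≤ M)
    (hnd : ¬ diag (em (M : ℤ) q)) :
    (vnNbrs (em (M : ℤ) q) ∩ (S M ∪ Cop (M : ℤ) (S j))).card
      = ((vnNbrs q).filter (fun r => r ∈ S j ∧ c0 r)).card
        + ((vnNbrs q).filter wallp).card := by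
  have key : ∀ r ∈ vnNbrs q,
      (em (M : ℤ) r ∈ S M ∪ Cop (M : ℤ) (S j)) ↔ ((r ∈ S j ∧ c0 r) ∨ wallp r) := by
    intro r hr
    have hcw := g1 hq hr
    have hnr : nrm r ≤ M + 1 := le_trans (nrm_nbr' hr) (by omega)
    constructor
    · intro hbig
      rcases Finset.mem_union.1 hbig with hS | hC
      · have hb := S_ball S hS0 hS1 hstep M _ hS
        right
        simp only [c0, wallp, nrm, em, diag] at *
        omega
      · rw [mem_Cop] at hC
        rcases hC with ⟨q', hq', hc', he⟩ | ⟨q', hq', hc', he⟩ | ⟨q', hq', hc', he⟩ |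
          ⟨q', hq', hc', he⟩
        · left; have := em_inj (M:ℤ) he; subst this; exact ⟨hq', hc'⟩
        · exfalso
          have hb := S_ball S hS0 hS1 hstep j _ hq'
          rcases mem_vnNbrs.1 hr with rfl | rfl | rfl | rfl <;>
            · simp only [c0, wallp, nrm, em, diag, rho, Prod.mk.injEq] at *
              omega
        · exfalso
          have hb := S_ball S hS0 hS1 hstep j _ hq'
          rcases mem_vnNbrs.1 hr with rfl | rfl | rfl | rfl <;>
            · simp only [c0, wallp, nrm, em, diag, rho, Prod.mk.injEq] at *
              omega
        · exfalso
          have hb := S_ball S hS0 hS1 hstep j _ hq'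
          rcases mem_vnNbrs.1 hr with rfl | rfl | rfl | rfl <;>
            · simp only [c0, wallp, nrm, em, diag, rho, Prod.mk.injEq] at *
              omega
    · intro h
      rcases h with ⟨hrS, hrc⟩ | hw
      · exact Finset.mem_union_right _ (D0_subset_Cop (by
          simp only [D0, Finset.mem_image, Finset.mem_filter]
          exact ⟨r, ⟨hrS, hrc⟩, rfl⟩))
      · apply Finset.mem_union_left
        apply hL
        simp only [wallp, nrm, em, c0, diag] at *
        omega
  rw [← image_vnNbrs_em, card_image_inter (em_inj _), Finset.filter_congr key,
    Finset.filter_or, Finset.card_union_of_disjoint]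
  rw [Finset.disjoint_left]
  intro a ha1 ha2
  rw [Finset.mem_filter] at ha1 ha2
  have h1 := ha1.2.2
  have h2 := ha2.2
  simp only [c0, wallp] at h1 h2
  omega

lemma mem_big {M j : ℕ} (hM : 1 ≤ M) (hj : 1 ≤ j) (hjM : j ≤ M) {q : ℤ × ℤ}
    (hq : c0 q) (hqn : nrm q ≤ M) :
    (em (M:ℤ) q ∈ S M ∪ Cop (M:ℤ) (S j)) ↔ q ∈ S j := by
  constructor
  · intro h
    rcases Finset.mem_union.1 h with hS | hC
    · exfalso; have hb := S_ball S hS0 hS1 hstep M _ hS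
      simp only [c0, nrm, em] at *; omega
    · rw [mem_Cop] at hC
      rcases hC with ⟨q', hq', hc', he⟩ | ⟨q', hq', hc', he⟩ | ⟨q', hq', hc', he⟩ |
        ⟨q', hq', hc', he⟩
      · have := em_inj (M:ℤ) he; subst this; exact hq'
      · exfalso; have hb := S_ball S hS0 hS1 hstep j _ hq'
        simp only [c0, nrm, em, rho, Prod.mk.injEq] at *; omega
      · exfalso; have hb := S_ball S hS0 hS1 hstep j _ hq'
        simp only [c0, nrm, em, rho, Prod.mk.injEq] at *; omega
      · exfalso; have hb := S_ball S hS0 hS1 hstep j _ hq'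
        simp only [c0, nrm, em, rho, Prod.mk.injEq] at *; omega
  · intro h
    exact Finset.mem_union_right _ (D0_subset_Cop (by
      simp only [D0, Finset.mem_image, Finset.mem_filter]
      exact ⟨q, ⟨h, hq⟩, rfl⟩))

omit hS0 hS1 hstep in
lemma vnNbrs_em_iff {M : ℤ} {q r : ℤ × ℤ} :
    em M r ∈ vnNbrs (em M q) ↔ r ∈ vnNbrs q := by
  simp only [mem_vnNbrs, em, Prod.mk.injEq, Prod.ext_iff]; omega

lemma cnt_rho {n : ℕ} (p : ℤ × ℤ) :
    (vnNbrs (rho p) ∩ S n).card = (vnNbrs p ∩ S n).card := by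
  rw [← image_vnNbrs_rho, card_image_inter rho_inj, inter_eq_filter]
  apply Finset.card_nbij' id id <;> intro a ha <;>
    simp only [Finset.mem_coe, Finset.mem_filter, id] at * <;>
    refine ⟨ha.1, ?_⟩
  · exact (S_rho S hS0 hS1 hstep).2 (by exact ha.2)
  · exact (S_rho S hS0 hS1 hstep).1 ha.2

lemma east_core {M j : ℕ} (hM : 1 ≤ M)
    (hL : ∀ p : ℤ × ℤ, nrm p + 1 = M → p ∈ S M)
    (hj : 1 ≤ j) (hjM : j ≤ M)
    (hdec : S (M + j) = S M ∪ Cop (M : ℤ) (S j))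
    {p : ℤ × ℤ} (hp : p ∉ S (M + j)) (hcnt : (vnNbrs p ∩ S (M + j)).card = 1)
    (hnd : ¬ diag p) {n : ℤ × ℤ} (hn : n ∈ vnNbrs p) (hnD : n ∈ D0 (M : ℤ) (S j)) :
    ∃ q : ℤ × ℤ, p = em (M : ℤ) q ∧ c0 q ∧ q ∉ S j ∧ q ∈ S (j + 1) := by
  obtain ⟨q', hq'm, hq'e⟩ := Finset.mem_image.1 hnD
  rw [Finset.mem_filter] at hq'm
  obtain ⟨hq'S, hq'c⟩ := hq'm
  subst hq'e
  set q : ℤ × ℤ := (p.1 - M, p.2) with hqdef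
  have hpq : p = em (M : ℤ) q := by
    rw [hqdef, Prod.ext_iff]
    exact ⟨by show p.1 = (M : ℤ) + (p.1 - M); ring, rfl⟩
  have hqn' : q ∈ vnNbrs q' := by
    rw [← vnNbrs_em_iff (M := (M : ℤ)), ← hpq]
    exact vnNbrs_comm.1 hn
  have hb' : nrm q' + 1 ≤ j := S_ball S hS0 hS1 hstep j _ hq'S
  have hqnrm : nrm q ≤ M := le_trans (nrm_nbr' hqn') (by omega)
  rcases g1 hq'c hqn' with hqc | hqw
  · -- c0 q
    have hqSj : q ∉ S j := by
      intro hmem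
      exact hp (hdec ▸ (hpq ▸ (mem_big S hS0 hS1 hstep hM hj hjM hqc hqnrm).2 hmem))
    have hq0 : q ≠ (0, 0) := by
      intro h; exact hqSj (h ▸ zero_mem S hS0 hS1 hstep hj)
    have hnd' : ¬ diag (em (M : ℤ) q) := hpq ▸ hnd
    rw [hpq, hdec] at hcnt
    rw [geom S hS0 hS1 hstep hM hL hj hjM hqc hqnrm hnd'] at hcnt
    have hg2 := g2 hqc hq0
    have hW : ((vnNbrs q).filter wallp).card = 0 := by
      rcases hg2 with h | ⟨_, h⟩ <;> omega
    have hWe : (vnNbrs q).filter wallp = ∅ := Finset.card_eq_zero.1 hW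
    have hA : (vnNbrs q).filter (fun r => r ∈ S j ∧ c0 r)
        = (vnNbrs q).filter (· ∈ S j) := by
      apply Finset.filter_congr
      intro r hr
      show (r ∈ S j ∧ c0 r) ↔ r ∈ S j
      constructor
      · exact fun h => h.1
      · intro h
        refine ⟨h, (g1 hqc hr).resolve_right (fun hw => ?_)⟩
        have : r ∈ (vnNbrs q).filter wallp := Finset.mem_filter.2 ⟨hr, hw⟩
        rw [hWe] at this; exact absurd this (Finset.notMem_empty r)
    rw [hA, hW] at hcnt
    have hcntT : (vnNbrs q ∩ S j).card = 1 := by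
      rw [inter_eq_filter]; omega
    have hqsucc : q ∈ S (j + 1) := (hstep j hj q).2 (Or.inr ⟨hqSj, hcntT⟩)
    exact ⟨q, hpq, hqc, hqSj, hqsucc⟩
  · -- wallp q : p would be in the layer, contradiction
    exfalso
    apply hp
    apply S_le S hS0 hS1 hstep (Nat.le_add_right M j)
    apply hL
    rw [hpq]
    simp only [wallp, nrm, em] at *
    omega

lemma east_rev {M j : ℕ} (hM : 1 ≤ M)
    (hL : ∀ p : ℤ × ℤ, nrm p + 1 = M → p ∈ S M)
    (hj : 1 ≤ j) (hjM : j < M)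
    (hdec : S (M + j) = S M ∪ Cop (M : ℤ) (S j))
    {q : ℤ × ℤ} (hq : c0 q) (hqb : q ∉ S j) (hqS : q ∈ S (j + 1)) :
    em (M : ℤ) q ∈ S (M + j + 1) := by
  have hcntT : (vnNbrs q ∩ S j).card = 1 := by
    rcases (hstep j hj q).1 hqS with h | ⟨_, h⟩
    · exact absurd h hqb
    · exact h
  have hqnrm : nrm q + 1 ≤ j + 1 := S_ball S hS0 hS1 hstep (j + 1) _ hqS
  have hq0 : q ≠ (0, 0) := by
    intro h; exact hqb (h ▸ zero_mem S hS0 hS1 hstep hj)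
  have hndq : ¬ diag q := by
    intro hd; exact diag_cnt_ne_one S hS0 hS1 hstep hd hq0 hcntT
  have hnd : ¬ diag (em (M : ℤ) q) := by
    simp only [c0, diag, nrm, em] at *
    omega
  have hW : ((vnNbrs q).filter wallp).card = 0 := by
    rcases g2 hq hq0 with h | ⟨hd, _⟩
    · exact h
    · exact absurd hd hndq
  have hWe : (vnNbrs q).filter wallp = ∅ := Finset.card_eq_zero.1 hW
  have hA : (vnNbrs q).filter (fun r => r ∈ S j ∧ c0 r)
      = (vnNbrs q).filter (· ∈ S j) := by
    apply Finset.filter_congr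
    intro r hr
    show (r ∈ S j ∧ c0 r) ↔ r ∈ S j
    constructor
    · exact fun h => h.1
    · intro h
      refine ⟨h, (g1 hq hr).resolve_right (fun hw => ?_)⟩
      have : r ∈ (vnNbrs q).filter wallp := Finset.mem_filter.2 ⟨hr, hw⟩
      rw [hWe] at this; exact absurd this (Finset.notMem_empty r)
  have hgeom := geom S hS0 hS1 hstep hM hL hj (by omega) hq (by omega) hnd
  rw [hA, hW, ← inter_eq_filter, hcntT] at hgeom
  have hnm : em (M : ℤ) q ∉ S (M + j) := by
    rw [hdec]
    intro hmem
    exact hqb ((mem_big S hS0 hS1 hstep hM hj (by omega) hq (by omega)).1 hmem)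
  apply (hstep (M + j) (by omega) _).2
  right
  refine ⟨hnm, ?_⟩
  rw [hdec, hgeom]

lemma Mbase {M : ℕ} (hM : 1 ≤ M)
    (hL : ∀ p : ℤ × ℤ, nrm p + 1 = M → p ∈ S M)
    (hP : ∀ p ∉ S M, (vnNbrs p ∩ S M).card = 1 → p ∈ tips (M : ℤ)) :
    S (M + 1) = S M ∪ tips (M : ℤ) := by
  have htip0 : ((M : ℤ), (0 : ℤ)) ∈ S (M + 1) := by
    apply (hstep M hM _).2
    right
    constructor
    · intro hmem
      have := S_ball S hS0 hS1 hstep M _ hmem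
      simp only [nrm] at this; omega
    · rw [cnt_quad]
      have h1 : ((M : ℤ) - 1, (0 : ℤ)) ∈ S M := by
        apply hL; simp only [nrm]; omega
      have h2 : ((M : ℤ) + 1, (0 : ℤ)) ∉ S M := by
        intro hmem; have := S_ball S hS0 hS1 hstep M _ hmem
        simp only [nrm] at this; omega
      have h3 : ((M : ℤ), (-1 : ℤ)) ∉ S M := by
        intro hmem; have := S_ball S hS0 hS1 hstep M _ hmem
        simp only [nrm] at this; omega
      have h4 : ((M : ℤ), (1 : ℤ)) ∉ S M := by
        intro hmem; have := S_ball S hS0 hS1 hstep M _ hmem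
        simp only [nrm] at this; omega
      simp only [show ((M:ℤ), (0:ℤ)).1 = (M:ℤ) from rfl, show ((M:ℤ), (0:ℤ)).2 = (0:ℤ) from rfl]
      rw [if_pos h1, if_neg h2, if_neg (by simpa using h3), if_neg (by simpa using h4)]
  have htip1 : ((0 : ℤ), (M : ℤ)) ∈ S (M + 1) :=
    (S_rho S hS0 hS1 hstep).1 htip0
  have htip2 : ((-M : ℤ), (0 : ℤ)) ∈ S (M + 1) := by
    have := (S_rho S hS0 hS1 hstep).1 htip1
    simpa [rho] using this
  have htip3 : ((0 : ℤ), (-M : ℤ)) ∈ S (M + 1) := by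
    have := (S_rho S hS0 hS1 hstep).1 htip2
    simpa [rho] using this
  ext p
  rw [hstep M hM]
  constructor
  · rintro (h | ⟨hn, hc⟩)
    · exact Finset.mem_union_left _ h
    · exact Finset.mem_union_right _ (hP p hn hc)
  · intro h
    rcases Finset.mem_union.1 h with h | h
    · exact Or.inl h
    · simp only [tips, Finset.mem_insert, Finset.mem_singleton] at h
      have hfin : p ∈ S (M + 1) := by
        rcases h with rfl | rfl | rfl | rfl
        · exact htip0
        · exact htip1
        · exact htip2
        · exact htip3
      rcases (hstep M hM p).1 hfin with h' | h'
      · exact Or.inl h'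
      · exact Or.inr h'

omit hS0 hS1 hstep in
lemma rho_nbr {r p : ℤ × ℤ} (h : r ∈ vnNbrs p) : rho r ∈ vnNbrs (rho p) := by
  rw [← image_vnNbrs_rho]; exact Finset.mem_image_of_mem _ h

lemma Mgen {M : ℕ} (hM : 1 ≤ M)
    (hL : ∀ p : ℤ × ℤ, nrm p + 1 = M → p ∈ S M)
    (hP : ∀ p ∉ S M, (vnNbrs p ∩ S M).card = 1 → p ∈ tips (M : ℤ)) :
    ∀ j, 1 ≤ j → j ≤ M → S (M + j) = S M ∪ Cop (M : ℤ) (S j) := by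
  intro j
  induction j with
  | zero => intro h; omega
  | succ j ih =>
    intro _ hj1
    rcases Nat.eq_zero_or_pos j with rfl | hj
    · -- base case j+1 = 1
      show S (M + 1) = S M ∪ Cop (M : ℤ) (S 1)
      rw [Mbase S hS0 hS1 hstep hM hL hP]
      congr 1
      -- tips M = Cop M (S 1)
      ext r
      rw [mem_Cop]
      simp only [hS1, Finset.mem_singleton, tips, Finset.mem_insert,
        Finset.mem_singleton, em, rho, c0, Prod.ext_iff, exists_eq_left]
      constructor
      · rintro (⟨h1, h2⟩ | ⟨h1, h2⟩ | ⟨h1, h2⟩ | ⟨h1, h2⟩)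
        · exact Or.inl ⟨(0, 0), ⟨rfl, rfl⟩, by omega, by omega, by omega⟩
        · exact Or.inr (Or.inl ⟨(0, 0), ⟨rfl, rfl⟩, by omega, by omega, by omega⟩)
        · exact Or.inr (Or.inr (Or.inl ⟨(0, 0), ⟨rfl, rfl⟩, by omega, by omega, by omega⟩))
        · exact Or.inr (Or.inr (Or.inr ⟨(0, 0), ⟨rfl, rfl⟩, by omega, by omega, by omega⟩))
      · rintro (⟨q, ⟨hq1, hq2⟩, _, h1, h2⟩ | ⟨q, ⟨hq1, hq2⟩, _, h1, h2⟩ |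
          ⟨q, ⟨hq1, hq2⟩, _, h1, h2⟩ | ⟨q, ⟨hq1, hq2⟩, _, h1, h2⟩) <;> omega
    · -- inductive step
      have hdec := ih hj (by omega)
      have hMj1 : M + (j + 1) = (M + j) + 1 := by omega
      have hstep' := hstep (M + j) (by omega)
      have hD0mem : ∀ q : ℤ × ℤ, q ∈ S j → c0 q → em (M:ℤ) q ∈ D0 (M:ℤ) (S j) := by
        intro q h1 h2
        exact Finset.mem_image_of_mem _ (Finset.mem_filter.2 ⟨h1, h2⟩)
      have haux : ∀ q : ℤ × ℤ, q ∈ S (j + 1) → c0 q → em (M:ℤ) q ∈ S ((M + j) + 1) := by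
        intro q hq1 hqc
        by_cases hqj : q ∈ S j
        · apply S_mono S hS0 hS1 hstep
          rw [hdec]
          exact Finset.mem_union_right _ (D0_subset_Cop (hD0mem q hqj hqc))
        · exact east_rev S hS0 hS1 hstep hM hL hj (by omega) hdec hqc hqj hq1
      ext p
      constructor
      · intro hmem
        rw [hMj1] at hmem
        rcases (hstep' p).1 hmem with h | ⟨hnp, hcnt⟩
        · rw [hdec] at h
          rcases Finset.mem_union.1 h with h | h
          · exact Finset.mem_union_left _ h
          · exact Finset.mem_union_right _
              (Cop_mono (S_mono S hS0 hS1 hstep j) h)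
        · have hp0 : p ≠ (0, 0) := by
            intro h; exact hnp (h ▸ zero_mem S hS0 hS1 hstep (by omega))
          have hnd : ¬ diag p := fun hd =>
            diag_cnt_ne_one S hS0 hS1 hstep hd hp0 hcnt
          by_cases hcop : ∃ n ∈ vnNbrs p, n ∈ Cop (M : ℤ) (S j)
          · obtain ⟨n, hn, hnC⟩ := hcop
            rw [mem_Cop] at hnC
            apply Finset.mem_union_right
            rcases hnC with ⟨q, hqS, hqc, rfl⟩ | ⟨q, hqS, hqc, rfl⟩ |
              ⟨q, hqS, hqc, rfl⟩ | ⟨q, hqS, hqc, rfl⟩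
            · obtain ⟨q', he, hc', _, hsucc⟩ :=
                east_core S hS0 hS1 hstep hM hL hj (by omega) hdec hnp hcnt hnd hn
                  (hD0mem q hqS hqc)
              rw [he]
              exact D0_subset_Cop
                (Finset.mem_image_of_mem _ (Finset.mem_filter.2 ⟨hsucc, hc'⟩))
            · have hn1 : em (M:ℤ) q ∈ vnNbrs (rho (rho (rho p))) := by
                have h1 := rho_nbr (rho_nbr (rho_nbr hn))
                rwa [rho4] at h1
              have hnp1 : rho (rho (rho p)) ∉ S (M + j) := by
                rw [← S_rho S hS0 hS1 hstep, ← S_rho S hS0 hS1 hstep,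
                  ← S_rho S hS0 hS1 hstep]
                exact hnp
              have hcnt1 : (vnNbrs (rho (rho (rho p))) ∩ S (M + j)).card = 1 := by
                rw [cnt_rho S hS0 hS1 hstep, cnt_rho S hS0 hS1 hstep,
                  cnt_rho S hS0 hS1 hstep]
                exact hcnt
              have hnd1 : ¬ diag (rho (rho (rho p))) := by
                rw [diag_rho, diag_rho, diag_rho]; exact hnd
              obtain ⟨q', he, hc', _, hsucc⟩ :=
                east_core S hS0 hS1 hstep hM hL hj (by omega) hdec hnp1 hcnt1 hnd1 hn1
                  (hD0mem q hqS hqc)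
              rw [rho_mem_Cop, rho_mem_Cop, rho_mem_Cop, he]
              exact D0_subset_Cop
                (Finset.mem_image_of_mem _ (Finset.mem_filter.2 ⟨hsucc, hc'⟩))
            · have hn1 : em (M:ℤ) q ∈ vnNbrs (rho (rho p)) := by
                have h1 := rho_nbr (rho_nbr hn)
                rwa [rho4] at h1
              have hnp1 : rho (rho p) ∉ S (M + j) := by
                rw [← S_rho S hS0 hS1 hstep, ← S_rho S hS0 hS1 hstep]
                exact hnp
              have hcnt1 : (vnNbrs (rho (rho p)) ∩ S (M + j)).card = 1 := by
                rw [cnt_rho S hS0 hS1 hstep, cnt_rho S hS0 hS1 hstep]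
                exact hcnt
              have hnd1 : ¬ diag (rho (rho p)) := by
                rw [diag_rho, diag_rho]; exact hnd
              obtain ⟨q', he, hc', _, hsucc⟩ :=
                east_core S hS0 hS1 hstep hM hL hj (by omega) hdec hnp1 hcnt1 hnd1 hn1
                  (hD0mem q hqS hqc)
              rw [rho_mem_Cop, rho_mem_Cop, he]
              exact D0_subset_Cop
                (Finset.mem_image_of_mem _ (Finset.mem_filter.2 ⟨hsucc, hc'⟩))
            · have hn1 : em (M:ℤ) q ∈ vnNbrs (rho p) := by
                have h1 := rho_nbr hn
                rwa [rho4] at h1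
              have hnp1 : rho p ∉ S (M + j) := by
                rw [← S_rho S hS0 hS1 hstep]
                exact hnp
              have hcnt1 : (vnNbrs (rho p) ∩ S (M + j)).card = 1 := by
                rw [cnt_rho S hS0 hS1 hstep]
                exact hcnt
              have hnd1 : ¬ diag (rho p) := by
                rw [diag_rho]; exact hnd
              obtain ⟨q', he, hc', _, hsucc⟩ :=
                east_core S hS0 hS1 hstep hM hL hj (by omega) hdec hnp1 hcnt1 hnd1 hn1
                  (hD0mem q hqS hqc)
              rw [rho_mem_Cop, he]
              exact D0_subset_Cop
                (Finset.mem_image_of_mem _ (Finset.mem_filter.2 ⟨hsucc, hc'⟩))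
          · exfalso
            have hint : vnNbrs p ∩ Cop (M : ℤ) (S j) = ∅ := by
              rw [Finset.eq_empty_iff_forall_notMem]
              intro n hn'
              rw [Finset.mem_inter] at hn'
              exact hcop ⟨n, hn'.1, hn'.2⟩
            have hcnt' : (vnNbrs p ∩ S M).card = 1 := by
              rw [hdec, Finset.inter_union_distrib_left, hint,
                Finset.union_empty] at hcnt
              exact hcnt
            have hnpM : p ∉ S M := fun h =>
              hnp (hdec ▸ Finset.mem_union_left _ h)
            have hmem1 : p ∈ S (M + 1) := (hstep M hM p).2 (Or.inr ⟨hnpM, hcnt'⟩)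
            exact hnp (S_le S hS0 hS1 hstep (by omega) hmem1)
      · intro h
        rw [hMj1]
        rcases Finset.mem_union.1 h with h | h
        · exact S_le S hS0 hS1 hstep (by omega) h
        · rw [mem_Cop] at h
          rcases h with ⟨q, hqS, hqc, rfl⟩ | ⟨q, hqS, hqc, rfl⟩ |
            ⟨q, hqS, hqc, rfl⟩ | ⟨q, hqS, hqc, rfl⟩
          · exact haux q hqS hqc
          · exact (S_rho S hS0 hS1 hstep).1 (haux q hqS hqc)
          · exact (S_rho S hS0 hS1 hstep).1 ((S_rho S hS0 hS1 hstep).1 (haux q hqS hqc))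
          · exact (S_rho S hS0 hS1 hstep).1 ((S_rho S hS0 hS1 hstep).1
              ((S_rho S hS0 hS1 hstep).1 (haux q hqS hqc)))

lemma Pstep {M : ℕ} (hM : 1 ≤ M)
    (hL : ∀ p : ℤ × ℤ, nrm p + 1 = M → p ∈ S M)
    (hdec : S (M + M) = S M ∪ Cop (M : ℤ) (S M))
    (hSM1 : S (M + 1) = S M ∪ tips (M : ℤ)) :
    ∀ p ∉ S (M + M), (vnNbrs p ∩ S (M + M)).card = 1 → p ∈ tips ((M : ℤ) + M) := by
  intro p hnp hcnt
  have hp0 : p ≠ (0, 0) := by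
    intro h; exact hnp (h ▸ zero_mem S hS0 hS1 hstep (by omega))
  have hnd : ¬ diag p := fun hd => diag_cnt_ne_one S hS0 hS1 hstep hd hp0 hcnt
  have hD0mem : ∀ q : ℤ × ℤ, q ∈ S M → c0 q → em (M:ℤ) q ∈ D0 (M:ℤ) (S M) := by
    intro q h1 h2
    exact Finset.mem_image_of_mem _ (Finset.mem_filter.2 ⟨h1, h2⟩)
  -- resolve a tip conclusion from east_core applied to some rotation p' of p
  have key : ∀ p' : ℤ × ℤ, p' ∉ S (M + M) → (vnNbrs p' ∩ S (M + M)).card = 1 →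
      ¬ diag p' → (∃ n ∈ vnNbrs p', n ∈ D0 (M:ℤ) (S M)) → p' = ((M : ℤ) + M, 0) := by
    intro p' hnp' hcnt' hnd' ⟨n, hn, hnD⟩
    obtain ⟨q', he, hc', hnotin, hsucc⟩ :=
      east_core S hS0 hS1 hstep hM hL hM le_rfl hdec hnp' hcnt' hnd' hn hnD
    rw [hSM1] at hsucc
    rcases Finset.mem_union.1 hsucc with h | h
    · exact absurd h hnotin
    · simp only [tips, Finset.mem_insert, Finset.mem_singleton] at h
      rcases h with rfl | rfl | rfl | rfl
      · rw [he]; rfl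
      · exfalso; apply hnd'
        rw [he]; simp [diag, em]
      · exfalso
        simp only [c0] at hc'; omega
      · exfalso; apply hnd'
        rw [he]; simp only [diag, em]; omega
  by_cases hcop : ∃ n ∈ vnNbrs p, n ∈ Cop (M : ℤ) (S M)
  · obtain ⟨n, hn, hnC⟩ := hcop
    rw [mem_Cop] at hnC
    rcases hnC with ⟨q, hqS, hqc, rfl⟩ | ⟨q, hqS, hqc, rfl⟩ |
      ⟨q, hqS, hqc, rfl⟩ | ⟨q, hqS, hqc, rfl⟩
    · have := key p hnp hcnt hnd ⟨_, hn, hD0mem q hqS hqc⟩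
      rw [this]
      simp only [tips, Finset.mem_insert, Finset.mem_singleton, Prod.ext_iff]
      tauto
    · -- rotate three times
      have hn1 : em (M:ℤ) q ∈ vnNbrs (rho (rho (rho p))) := by
        have h1 := rho_nbr (rho_nbr (rho_nbr hn)); rwa [rho4] at h1
      have hnp1 : rho (rho (rho p)) ∉ S (M + M) := by
        rw [← S_rho S hS0 hS1 hstep, ← S_rho S hS0 hS1 hstep,
          ← S_rho S hS0 hS1 hstep]; exact hnp
      have hcnt1 : (vnNbrs (rho (rho (rho p))) ∩ S (M + M)).card = 1 := by
        rw [cnt_rho S hS0 hS1 hstep, cnt_rho S hS0 hS1 hstep,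
          cnt_rho S hS0 hS1 hstep]; exact hcnt
      have hnd1 : ¬ diag (rho (rho (rho p))) := by
        rw [diag_rho, diag_rho, diag_rho]; exact hnd
      have hkey := key _ hnp1 hcnt1 hnd1 ⟨_, hn1, hD0mem q hqS hqc⟩
      have hpe : p = rho ((M : ℤ) + M, 0) := by
        rw [← hkey, rho4]
      rw [hpe]
      simp [tips, rho, Prod.ext_iff]
    · have hn1 : em (M:ℤ) q ∈ vnNbrs (rho (rho p)) := by
        have h1 := rho_nbr (rho_nbr hn); rwa [rho4] at h1
      have hnp1 : rho (rho p) ∉ S (M + M) := by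
        rw [← S_rho S hS0 hS1 hstep, ← S_rho S hS0 hS1 hstep]; exact hnp
      have hcnt1 : (vnNbrs (rho (rho p)) ∩ S (M + M)).card = 1 := by
        rw [cnt_rho S hS0 hS1 hstep, cnt_rho S hS0 hS1 hstep]; exact hcnt
      have hnd1 : ¬ diag (rho (rho p)) := by
        rw [diag_rho, diag_rho]; exact hnd
      have hkey := key _ hnp1 hcnt1 hnd1 ⟨_, hn1, hD0mem q hqS hqc⟩
      have hpe : p = rho (rho ((M : ℤ) + M, 0)) := by
        have := congrArg (fun x => rho (rho x)) hkey
        try simp only at this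
        rw [← this, rho4]
      rw [hpe]
      simp [tips, rho, Prod.ext_iff]
    · have hn1 : em (M:ℤ) q ∈ vnNbrs (rho p) := by
        have h1 := rho_nbr hn; rwa [rho4] at h1
      have hnp1 : rho p ∉ S (M + M) := by
        rw [← S_rho S hS0 hS1 hstep]; exact hnp
      have hcnt1 : (vnNbrs (rho p) ∩ S (M + M)).card = 1 := by
        rw [cnt_rho S hS0 hS1 hstep]; exact hcnt
      have hnd1 : ¬ diag (rho p) := by rw [diag_rho]; exact hnd
      have hkey := key _ hnp1 hcnt1 hnd1 ⟨_, hn1, hD0mem q hqS hqc⟩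
      have hpe : p = rho (rho (rho ((M : ℤ) + M, 0))) := by
        have := congrArg (fun x => rho (rho (rho x))) hkey
        try simp only at this
        rw [← this, rho4]
      rw [hpe]
      simp [tips, rho, Prod.ext_iff]
  · exfalso
    have hint : vnNbrs p ∩ Cop (M : ℤ) (S M) = ∅ := by
      rw [Finset.eq_empty_iff_forall_notMem]
      intro n hn'
      rw [Finset.mem_inter] at hn'
      exact hcop ⟨n, hn'.1, hn'.2⟩
    have hcnt' : (vnNbrs p ∩ S M).card = 1 := by
      rw [hdec, Finset.inter_union_distrib_left, hint, Finset.union_empty] at hcnt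
      exact hcnt
    have hnpM : p ∉ S M := fun h => hnp (hdec ▸ Finset.mem_union_left _ h)
    have hmem1 : p ∈ S (M + 1) := (hstep M hM p).2 (Or.inr ⟨hnpM, hcnt'⟩)
    exact hnp (S_le S hS0 hS1 hstep (by omega) hmem1)

lemma Lstep {M : ℕ} (hM : 1 ≤ M)
    (hL : ∀ p : ℤ × ℤ, nrm p + 1 = M → p ∈ S M)
    (hdec : S (M + M) = S M ∪ Cop (M : ℤ) (S M)) :
    ∀ p : ℤ × ℤ, nrm p + 1 = M + M → p ∈ S (M + M) := by
  have key : ∀ r : ℤ × ℤ, nrm r + 1 = M + M → ((r.2.natAbs : ℤ) ≤ r.1) →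
      r ∈ S (M + M) := by
    intro r hr hw
    have hq : c0 (r.1 - M, r.2) ∧ nrm (r.1 - M, r.2) + 1 = M := by
      constructor
      · simp only [c0]; simp only [nrm] at hr; omega
      · simp only [nrm] at hr ⊢; omega
    have hqS : (r.1 - M, r.2) ∈ S M := hL _ hq.2
    have hmem : em (M:ℤ) (r.1 - M, r.2) ∈ D0 (M:ℤ) (S M) :=
      Finset.mem_image_of_mem _ (Finset.mem_filter.2 ⟨hqS, hq.1⟩)
    have hre : em (M:ℤ) (r.1 - M, r.2) = r := by
      rw [Prod.ext_iff]
      exact ⟨by show (M : ℤ) + (r.1 - M) = r.1; ring, rfl⟩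
    rw [hdec]
    exact Finset.mem_union_right _ (D0_subset_Cop (hre ▸ hmem))
  intro p hp
  have hcover : ((p.2.natAbs : ℤ) ≤ p.1) ∨ ((p.1.natAbs : ℤ) ≤ p.2) ∨
      ((p.2.natAbs : ℤ) ≤ -p.1) ∨ ((p.1.natAbs : ℤ) ≤ -p.2) := by omega
  rcases hcover with h | h | h | h
  · exact key p hp h
  · -- p in north wedge: r = rho³ p = (p.2, -p.1)
    have hr := key (p.2, -p.1) (by simp only [nrm] at hp ⊢; omega)
      (by simp only; omega)
    have h1 : rho (p.2, -p.1) = p := by simp [rho]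
    exact h1 ▸ (S_rho S hS0 hS1 hstep).1 hr
  · -- west: r = rho² p = (-p.1, -p.2)
    have hr := key (-p.1, -p.2) (by simp only [nrm] at hp ⊢; omega)
      (by simp only; omega)
    have h1 : rho (rho (-p.1, -p.2)) = p := by simp [rho]
    exact h1 ▸ (S_rho S hS0 hS1 hstep).1 ((S_rho S hS0 hS1 hstep).1 hr)
  · -- south: r = rho p = (-p.2, p.1)
    have hr := key (-p.2, p.1) (by simp only [nrm] at hp ⊢; omega)
      (by simp only; omega)
    have h1 : rho (rho (rho (-p.2, p.1))) = p := by simp [rho]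
    exact h1 ▸ (S_rho S hS0 hS1 hstep).1 ((S_rho S hS0 hS1 hstep).1
      ((S_rho S hS0 hS1 hstep).1 hr))

lemma grand : ∀ k : ℕ,
    (∀ p : ℤ × ℤ, nrm p + 1 = 2 ^ k → p ∈ S (2 ^ k)) ∧
    (∀ p ∉ S (2 ^ k), (vnNbrs p ∩ S (2 ^ k)).card = 1 →
      p ∈ tips ((2 ^ k : ℕ) : ℤ)) ∧
    (∀ j, 1 ≤ j → j ≤ 2 ^ k → S (2 ^ k + j) = S (2 ^ k) ∪ Cop ((2 ^ k : ℕ) : ℤ) (S j)) := by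
  intro k
  induction k with
  | zero =>
    refine ⟨?_, ?_, ?_⟩
    · intro p hp
      have : p = ((0 : ℤ), (0 : ℤ)) := by
        simp only [nrm, pow_zero] at hp
        rw [Prod.ext_iff]; omega
      rw [this, pow_zero, hS1]; simp
    · intro p hp hcnt
      rw [pow_zero] at *
      rw [hS1, cnt_quad] at hcnt
      rw [hS1] at hp
      simp only [Finset.mem_singleton, Prod.ext_iff] at hcnt hp
      simp only [tips, Finset.mem_insert, Finset.mem_singleton, Prod.ext_iff]
      split_ifs at hcnt <;> omega
    · intro j hj1 hj2
      rw [pow_zero] at *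
      apply Mgen S hS0 hS1 hstep le_rfl
      · intro p hp
        have : p = ((0 : ℤ), (0 : ℤ)) := by
          simp only [nrm] at hp
          rw [Prod.ext_iff]; omega
        rw [this, hS1]; simp
      · intro p hp hcnt
        rw [hS1, cnt_quad] at hcnt
        rw [hS1] at hp
        simp only [Finset.mem_singleton, Prod.ext_iff] at hcnt hp
        simp only [tips, Finset.mem_insert, Finset.mem_singleton, Prod.ext_iff]
        split_ifs at hcnt <;> omega
      · exact hj1
      · exact hj2
  | succ k ih =>
    obtain ⟨hL, hP, hM⟩ := ih
    have hM1 : (1 : ℕ) ≤ 2 ^ k := Nat.one_le_two_pow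
    have h2 : 2 ^ (k + 1) = 2 ^ k + 2 ^ k := by rw [pow_succ]; omega
    have hdec : S (2 ^ k + 2 ^ k) = S (2 ^ k) ∪ Cop ((2 ^ k : ℕ) : ℤ) (S (2 ^ k)) :=
      hM (2 ^ k) hM1 le_rfl
    have hL2 : ∀ p : ℤ × ℤ, nrm p + 1 = 2 ^ k + 2 ^ k → p ∈ S (2 ^ k + 2 ^ k) :=
      Lstep S hS0 hS1 hstep hM1 hL hdec
    have hSM1 : S (2 ^ k + 1) = S (2 ^ k) ∪ tips ((2 ^ k : ℕ) : ℤ) :=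
      Mbase S hS0 hS1 hstep hM1 hL hP
    have hP2 : ∀ p ∉ S (2 ^ k + 2 ^ k), (vnNbrs p ∩ S (2 ^ k + 2 ^ k)).card = 1 →
        p ∈ tips (((2 ^ k : ℕ) : ℤ) + (2 ^ k : ℕ)) :=
      Pstep S hS0 hS1 hstep hM1 hL hdec hSM1
    refine ⟨?_, ?_, ?_⟩
    · intro p hp
      rw [h2] at *
      exact hL2 p hp
    · intro p hp hcnt
      rw [h2] at *
      have := hP2 p hp hcnt
      convert this using 2; push_cast; rfl
    · intro j hj1 hj2
      rw [h2] at *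
      have := Mgen S hS0 hS1 hstep (by omega) hL2
        (fun p hp hcnt => by
          have := hP2 p hp hcnt
          convert this using 2; push_cast; rfl) j hj1 hj2
      convert this using 3
  
lemma card_Cop {M j : ℕ} (hM : 1 ≤ M) (hj : 1 ≤ j) (hjM : j ≤ M) :
    (Cop (M : ℤ) (S j)).card = 4 * ((S j).filter c0).card := by
  set D := D0 (M : ℤ) (S j) with hD
  have hw0 : ∀ r ∈ D, (r.2.natAbs : ℤ) < r.1 := by
    intro r hr
    obtain ⟨q, hq, rfl⟩ := Finset.mem_image.1 hr
    rw [Finset.mem_filter] at hq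
    have hball := S_ball S hS0 hS1 hstep j _ hq.1
    have hc := hq.2
    rcases eq_or_ne q ((0:ℤ), (0:ℤ)) with rfl | hne
    · simp only [em, nrm, c0] at *
      omega
    · have hnd : ¬ diag q := by
        intro hd
        exact diag_not_mem S hS0 hS1 hstep hd hne hq.1
      simp only [em, nrm, c0, diag] at *
      omega
  have hw1 : ∀ r ∈ D.image rho, (r.1.natAbs : ℤ) < r.2 := by
    intro r hr
    obtain ⟨p, hp, rfl⟩ := Finset.mem_image.1 hr
    have := hw0 p hp
    simp only [rho]
    omega
  have hw2 : ∀ r ∈ (D.image rho).image rho, (r.2.natAbs : ℤ) < -r.1 := by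
    intro r hr
    obtain ⟨p, hp, rfl⟩ := Finset.mem_image.1 hr
    have := hw1 p hp
    simp only [rho]
    omega
  have hw3 : ∀ r ∈ ((D.image rho).image rho).image rho, (r.1.natAbs : ℤ) < -r.2 := by
    intro r hr
    obtain ⟨p, hp, rfl⟩ := Finset.mem_image.1 hr
    have := hw2 p hp
    simp only [rho]
    omega
  have d01 : Disjoint D (D.image rho) := by
    rw [Finset.disjoint_left]; intro r h0 h1
    have := hw0 r h0; have := hw1 r h1; omega
  have d02 : Disjoint D ((D.image rho).image rho) := by
    rw [Finset.disjoint_left]; intro r h0 h1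
    have := hw0 r h0; have := hw2 r h1; omega
  have d03 : Disjoint D (((D.image rho).image rho).image rho) := by
    rw [Finset.disjoint_left]; intro r h0 h1
    have := hw0 r h0; have := hw3 r h1; omega
  have d12 : Disjoint (D.image rho) ((D.image rho).image rho) := by
    rw [Finset.disjoint_left]; intro r h0 h1
    have := hw1 r h0; have := hw2 r h1; omega
  have d13 : Disjoint (D.image rho) (((D.image rho).image rho).image rho) := by
    rw [Finset.disjoint_left]; intro r h0 h1
    have := hw1 r h0; have := hw3 r h1; omega
  have d23 : Disjoint ((D.image rho).image rho) (((D.image rho).image rho).image rho) := by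
    rw [Finset.disjoint_left]; intro r h0 h1
    have := hw2 r h0; have := hw3 r h1; omega
  have hCop : Cop (M : ℤ) (S j) = ((D ∪ D.image rho) ∪ (D.image rho).image rho) ∪
      ((D.image rho).image rho).image rho := rfl
  rw [hCop, Finset.card_union_of_disjoint, Finset.card_union_of_disjoint,
    Finset.card_union_of_disjoint d01]
  · have e1 : (D.image rho).card = D.card := Finset.card_image_of_injective _ rho_inj
    have e2 : ((D.image rho).image rho).card = D.card := by
      rw [Finset.card_image_of_injective _ rho_inj, e1]
    have e3 : (((D.image rho).image rho).image rho).card = D.card := by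
      rw [Finset.card_image_of_injective _ rho_inj, e2]
    have e0 : D.card = ((S j).filter c0).card :=
      Finset.card_image_of_injective _ (em_inj _)
    omega
  · exact Finset.disjoint_union_left.2 ⟨d02, d12⟩
  · exact Finset.disjoint_union_left.2 ⟨Finset.disjoint_union_left.2 ⟨d03, d13⟩, d23⟩

lemma Cop_disj {M j : ℕ} (hM : 1 ≤ M) (hj : 1 ≤ j) (hjM : j ≤ M) :
    Disjoint (S M) (Cop (M : ℤ) (S j)) := by
  rw [Finset.disjoint_left]
  intro p hpS hpC
  have hball := S_ball S hS0 hS1 hstep M _ hpS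
  rw [mem_Cop] at hpC
  have key : ∀ q : ℤ × ℤ, q ∈ S j → c0 q → M ≤ nrm (em (M:ℤ) q) := by
    intro q hq hc
    have hb := S_ball S hS0 hS1 hstep j _ hq
    simp only [c0, nrm, em] at *
    omega
  rcases hpC with ⟨q, h1, h2, rfl⟩ | ⟨q, h1, h2, rfl⟩ | ⟨q, h1, h2, rfl⟩ | ⟨q, h1, h2, rfl⟩
  · have := key q h1 h2; omega
  · have := key q h1 h2; rw [nrm_rho] at hball; omega
  · have := key q h1 h2; rw [nrm_rho, nrm_rho] at hball; omega
  · have := key q h1 h2; rw [nrm_rho, nrm_rho, nrm_rho] at hball; omega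

omit hS0 hS1 hstep in
lemma rot_count (B : Finset (ℤ × ℤ)) (hB : ∀ p : ℤ × ℤ, p ∈ B ↔ rho p ∈ B)
    (hc : ∀ p ∈ B, p ≠ ((0:ℤ), (0:ℤ)) ∧ ¬ diag p) :
    4 * (B.filter c0).card = 3 * B.card := by
  have gen : ∀ (Q : ℤ × ℤ → Prop) (_ : DecidablePred Q),
      (B.filter (fun p => Q (rho p))).card = (B.filter Q).card := by
    intro Q _
    refine Finset.card_bij' (fun p _ => rho p) (fun p _ => rho (rho (rho p)))
      ?_ ?_ ?_ ?_
    · intro a ha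
      rw [Finset.mem_filter] at ha ⊢
      exact ⟨(hB a).1 ha.1, ha.2⟩
    · intro a ha
      rw [Finset.mem_filter] at ha ⊢
      refine ⟨(hB _).1 ((hB _).1 ((hB _).1 ha.1)), ?_⟩
      show Q (rho (rho (rho (rho a))))
      rw [rho4]; exact ha.2
    · intro a _; exact rho4 a
    · intro a _; exact rho4 a
  have g1 := gen c0 inferInstance
  have g2 := gen (fun p => c0 (rho p)) inferInstance
  have g3 := gen (fun p => c0 (rho (rho p))) inferInstance
  have hsum : (B.filter c0).card + (B.filter (fun p => c0 (rho p))).card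
      + (B.filter (fun p => c0 (rho (rho p)))).card
      + (B.filter (fun p => c0 (rho (rho (rho p))))).card = 3 * B.card := by
    rw [Finset.card_filter, Finset.card_filter, Finset.card_filter, Finset.card_filter,
      ← Finset.sum_add_distrib, ← Finset.sum_add_distrib, ← Finset.sum_add_distrib]
    have hpt : ∀ p ∈ B, ((if c0 p then 1 else 0) + (if c0 (rho p) then 1 else 0)
        + (if c0 (rho (rho p)) then 1 else 0)
        + (if c0 (rho (rho (rho p))) then 1 else 0)) = 3 := by
      intro p hp
      obtain ⟨h0, hd⟩ := hc p hp
      have h0' : ¬(p.1 = 0 ∧ p.2 = 0) := fun h => h0 (Prod.ext h.1 h.2)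
      split_ifs <;> simp only [c0, rho, diag, true_or, and_true, false_or] at * <;> omega
    rw [Finset.sum_congr rfl hpt, Finset.sum_const, smul_eq_mul]
    omega
  omega

end Auto
end UW

/-- **Theorem 3(i).** For the Ulam-Warburton cellular automaton, the number
`u n` of cells turned ON at stage `n` satisfies `u 0 = 0`, `u 1 = 1`, and for
every `k ≥ 0`, `u (2^k + 1) = 4` and `u (2^k + j) = 3 * u j` for
`2 ≤ j ≤ 2^k`. -/
theorem ulam_warburton_recurrence
    (S : ℕ → Finset (ℤ × ℤ))
    (hS0 : S 0 = ∅)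
    (hS1 : S 1 = {((0 : ℤ), (0 : ℤ))})
    (hstep : ∀ n, 1 ≤ n → ∀ p : ℤ × ℤ,
      p ∈ S (n + 1) ↔ p ∈ S n ∨ (p ∉ S n ∧ (vnNbrs p ∩ S n).card = 1))
    (u : ℕ → ℕ)
    (hu0 : u 0 = 0)
    (hu : ∀ n, 1 ≤ n → u n = (S n).card - (S (n - 1)).card) :
    u 0 = 0 ∧ u 1 = 1 ∧
      ∀ k, u (2 ^ k + 1) = 4 ∧
        ∀ j, 2 ≤ j → j ≤ 2 ^ k → u (2 ^ k + j) = 3 * u j := by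
  have hu1 : u 1 = 1 := by
    rw [hu 1 le_rfl, hS1]
    norm_num [hS0]
  refine ⟨hu0, hu1, ?_⟩
  intro k
  obtain ⟨hL, hP, hM⟩ := UW.grand S hS0 hS1 hstep k
  have hM1 : (1 : ℕ) ≤ 2 ^ k := Nat.one_le_two_pow
  constructor
  · -- u (2^k + 1) = 4
    have hSM1 := UW.Mbase S hS0 hS1 hstep hM1 hL hP
    have hdisj : Disjoint (S (2 ^ k)) (UW.tips ((2 ^ k : ℕ) : ℤ)) := by
      rw [Finset.disjoint_left]
      intro p hp ht
      have hb := UW.S_ball S hS0 hS1 hstep (2 ^ k) p hp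
      simp only [UW.tips, Finset.mem_insert, Finset.mem_singleton] at ht
      rcases ht with rfl | rfl | rfl | rfl <;> (simp only [UW.nrm] at hb; omega)
    have hMpos : (0 : ℤ) < ((2 ^ k : ℕ) : ℤ) := by exact_mod_cast hM1
    have hcard4 : (UW.tips ((2 ^ k : ℕ) : ℤ)).card = 4 := by
      rw [UW.tips]
      rw [Finset.card_insert_of_notMem (by
          simp only [Finset.mem_insert, Finset.mem_singleton, Prod.ext_iff]; omega),
        Finset.card_insert_of_notMem (by
          simp only [Finset.mem_insert, Finset.mem_singleton, Prod.ext_iff]; omega),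
        Finset.card_insert_of_notMem (by
          simp only [Finset.mem_singleton, Prod.ext_iff]; omega),
        Finset.card_singleton]
    have hctot : (S (2 ^ k + 1)).card = (S (2 ^ k)).card + 4 := by
      rw [hSM1, Finset.card_union_of_disjoint hdisj, hcard4]
    rw [hu (2 ^ k + 1) (by omega)]
    simp only [Nat.add_sub_cancel]
    omega
  · intro j hj2 hjM
    have hd1 := hM j (by omega) hjM
    have hd2 := hM (j - 1) (by omega) (by omega)
    have hC1 := UW.card_Cop S hS0 hS1 hstep hM1 (by omega : 1 ≤ j) hjM
    have hC2 := UW.card_Cop S hS0 hS1 hstep hM1 (by omega : 1 ≤ j - 1) (by omega)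
    have hdisj1 := UW.Cop_disj S hS0 hS1 hstep hM1 (by omega : 1 ≤ j) hjM
    have hdisj2 := UW.Cop_disj S hS0 hS1 hstep hM1 (by omega : 1 ≤ j - 1) (by omega)
    have hcard1 : (S (2 ^ k + j)).card
        = (S (2 ^ k)).card + 4 * ((S j).filter UW.c0).card := by
      rw [hd1, Finset.card_union_of_disjoint hdisj1, hC1]
    have hcard2 : (S (2 ^ k + (j - 1))).card
        = (S (2 ^ k)).card + 4 * ((S (j - 1)).filter UW.c0).card := by
      rw [hd2, Finset.card_union_of_disjoint hdisj2, hC2]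
    have hsub : S (j - 1) ⊆ S j := UW.S_le S hS0 hS1 hstep (by omega)
    have hBrho : ∀ p : ℤ × ℤ, p ∈ S j \ S (j - 1) ↔ UW.rho p ∈ S j \ S (j - 1) := by
      intro p
      simp only [Finset.mem_sdiff]
      constructor
      · rintro ⟨h1, h2⟩
        exact ⟨(UW.S_rho S hS0 hS1 hstep).1 h1,
          fun hx => h2 ((UW.S_rho S hS0 hS1 hstep).2 hx)⟩
      · rintro ⟨h1, h2⟩
        exact ⟨(UW.S_rho S hS0 hS1 hstep).2 h1,
          fun hx => h2 ((UW.S_rho S hS0 hS1 hstep).1 hx)⟩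
    have hBc : ∀ p ∈ S j \ S (j - 1), p ≠ ((0:ℤ), (0:ℤ)) ∧ ¬ UW.diag p := by
      intro p hp
      rw [Finset.mem_sdiff] at hp
      have hne : p ≠ ((0:ℤ), (0:ℤ)) := by
        intro h
        exact hp.2 (h ▸ UW.zero_mem S hS0 hS1 hstep (by omega))
      exact ⟨hne, fun hd => UW.diag_not_mem S hS0 hS1 hstep hd hne hp.1⟩
    have hrot := UW.rot_count (S j \ S (j - 1)) hBrho hBc
    have hBcard : (S j \ S (j - 1)).card = (S j).card - (S (j - 1)).card :=
      Finset.card_sdiff_of_subset hsub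
    have hlecard : (S (j - 1)).card ≤ (S j).card := Finset.card_le_card hsub
    have hFsplit : ((S j).filter UW.c0).card
        = ((S (j - 1)).filter UW.c0).card + ((S j \ S (j - 1)).filter UW.c0).card := by
      have hun : S j = S (j - 1) ∪ (S j \ S (j - 1)) :=
        (Finset.union_sdiff_of_subset hsub).symm
      rw [show (S j).filter UW.c0 = (S (j - 1) ∪ (S j \ S (j - 1))).filter UW.c0 by
          rw [← hun],
        Finset.filter_union,
        Finset.card_union_of_disjoint
          (Finset.disjoint_filter_filter Finset.sdiff_disjoint.symm)]
    have huj : u j = (S j).card - (S (j - 1)).card := hu j (by omega)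
    have hujM : u (2 ^ k + j) = (S (2 ^ k + j)).card - (S (2 ^ k + (j - 1))).card := by
      rw [hu (2 ^ k + j) (by omega)]
      have he : 2 ^ k + j - 1 = 2 ^ k + (j - 1) := by omega
      rw [he]
    omega
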